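/- In any treelike model, the connectedness axiom □(□φ → ψ) ∨ □(□ψ → φ) is valid. -/
import Mathlib

inductive Fml (α : Type) : Type
  | atom : α → Fml α
  | neg : Fml α → Fml α
  | and : Fml α → Fml α → Fml α
  | K : Fml α → Fml α
  | box : Fml α → Fml α

def Fml.imp {α : Type} (φ ψ : Fml α) : Fml α := (φ.and ψ.neg).neg
def Fml.or {α : Type} (φ ψ : Fml α) : Fml α := (φ.neg.and ψ.neg).neg
def Fml.dia {α : Type} (φ : Fml α) : Fml α := φ.neg.box.neg
def Fml.L {α : Type} (φ : Fml α) : Fml α := φ.neg.K.neg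

/-- Satisfaction in a subset model `⟨X, O, i⟩` at a pair `(x, U)`. -/
def Sat {X α : Type} (O : Set (Set X)) (i : α → Set X) : X → Set X → Fml α → Prop
  | x, _, .atom A => x ∈ i A
  | x, U, .neg φ => ¬ Sat O i x U φ
  | x, U, .and φ ψ => Sat O i x U φ ∧ Sat O i x U ψ
  | x, U, .K φ => ∀ y ∈ U, Sat O i y U φ
  | x, U, .box φ => ∀ V ∈ O, x ∈ V → V ⊆ U → Sat O i x V φ

/-- A treelike space: `X ∈ O` and any two members of `O` are comparable or disjoint. -/
def Treelike {X : Type} (O : Set (Set X)) : Prop :=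
  Set.univ ∈ O ∧ ∀ U ∈ O, ∀ V ∈ O, U ⊆ V ∨ V ⊆ U ∨ U ∩ V = ∅

/-- In any treelike model, the connectedness axiom `□(□φ → ψ) ∨ □(□ψ → φ)` is valid. -/
theorem conn_valid {X α : Type} (O : Set (Set X)) (i : α → Set X) (hT : Treelike O)
    (φ ψ : Fml α) (x : X) (U : Set X) (hU : U ∈ O) (hx : x ∈ U) :
    Sat O i x U (((φ.box.imp ψ).box).or ((ψ.box.imp φ).box)) := by
  simp only [Fml.or, Fml.imp, Sat, not_and, not_not, not_forall]
  intro h1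
  obtain ⟨V, hV, hxV, hVU, hbφ, hnψ⟩ := h1
  intro h2
  obtain ⟨W, hW, hxW, hWU, hbψ, hnφ⟩ := h2
  rcases hT.2 V hV W hW with hVW | hWV | hdisj
  · exact hnψ (hbψ V hV hxV hVW)
  · exact hnφ (hbφ W hW hxW hWV)
  · exact Set.eq_empty_iff_forall_notMem.mp hdisj x ⟨hxV, hxW⟩
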